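/- Let S and H be real Hilbert spaces and j : S → H an injective continuous linear map with dense range, and let b : S × S × S → ℝ be a trilinear form satisfying |b(u,v,w)| ≤ c ‖j u‖_H^{1/2} ‖u‖_S^{1/2} ‖j v‖_H^{1/2} ‖v‖_S^{1/2} ‖w‖_S for all u, v, w ∈ S. Let I = (0,T) with 0 < T < ∞, and suppose u ∈ L²(I,S) with j ∘ u ∈ L^∞(I,H). Then the S'-valued function N(u), defined for a.e. t by N(u)(t)(w) = b(u(t), u(t), w), belongs to L²(I,S') and ‖N(u)‖_{L²(I,S')} ≤ c ‖j ∘ u‖_{L^∞(I,H)} ‖u‖_{L²(I,S)}. -/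

import Mathlib

open MeasureTheory Set
open scoped ENNReal

/-- **The nonlinear term as an `L²` function with values in the dual.**
Let `S ↪ H` (via `j`, injective continuous with dense range) be real Hilbert spaces and `b`
a (continuous) trilinear form on `S` satisfying the interpolation estimate
`|b (u,v,w)| ≤ c ‖j u‖^{1/2} ‖u‖^{1/2} ‖j v‖^{1/2} ‖v‖^{1/2} ‖w‖`.  If `u ∈ L²((0,T),S)` and
`j ∘ u ∈ L^∞((0,T),H)`, then the `S'`-valued function `N (u) (t) = b (u t, u t, ·)` belongs
to `L²((0,T),S')` with `‖N (u)‖_{L²} ≤ c ‖j ∘ u‖_{L^∞} ‖u‖_{L²}`. -/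
theorem nonlinear_term_L2 {S H : Type*}
    [NormedAddCommGroup S] [InnerProductSpace ℝ S] [CompleteSpace S]
    [NormedAddCommGroup H] [InnerProductSpace ℝ H] [CompleteSpace H]
    (j : S →L[ℝ] H) (hjinj : Function.Injective j) (hjd : DenseRange j)
    (b : S →L[ℝ] S →L[ℝ] S →L[ℝ] ℝ) (c : ℝ)
    (hb : ∀ u v w : S, |b u v w| ≤
      c * ‖j u‖ ^ ((1:ℝ)/2) * ‖u‖ ^ ((1:ℝ)/2) * ‖j v‖ ^ ((1:ℝ)/2) * ‖v‖ ^ ((1:ℝ)/2) * ‖w‖)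
    (T : ℝ) (hT : 0 < T)
    (u : ℝ → S) (hu : MemLp u 2 (volume.restrict (Ioo 0 T)))
    (huInf : MemLp (fun t => j (u t)) ⊤ (volume.restrict (Ioo 0 T))) :
    MemLp (fun t => b (u t) (u t)) 2 (volume.restrict (Ioo 0 T)) ∧
    eLpNorm (fun t => b (u t) (u t)) 2 (volume.restrict (Ioo 0 T)) ≤
      ENNReal.ofReal c * eLpNorm (fun t => j (u t)) ⊤ (volume.restrict (Ioo 0 T)) *
        eLpNorm u 2 (volume.restrict (Ioo 0 T)) := by
  set μ := volume.restrict (Ioo 0 T) with hμ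
  rcases subsingleton_or_nontrivial S with hS | hS
  · -- trivial case: S is a subsingleton, everything is zero
    have hf : (fun t => b (u t) (u t)) = fun _ => (0 : S →L[ℝ] ℝ) := by
      funext t
      rw [Subsingleton.elim (u t) (0 : S)]
      simp
    constructor
    · rw [hf]; exact memLp_const 0
    · rw [hf]
      rw [eLpNorm_zero' (ε := S →L[ℝ] ℝ)]; exact zero_le
  · -- nontrivial case: first show c ≥ 0
    obtain ⟨x, hx⟩ := exists_ne (0 : S)
    have hx1 : (0:ℝ) < ‖x‖ := norm_pos_iff.mpr hx
    have hx2 : (0:ℝ) < ‖j x‖ := by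
      rw [norm_pos_iff]
      intro h
      exact hx (hjinj (by simpa using h))
    have hP : (0:ℝ) < ‖j x‖ ^ ((1:ℝ)/2) * ‖x‖ ^ ((1:ℝ)/2) * ‖j x‖ ^ ((1:ℝ)/2) *
        ‖x‖ ^ ((1:ℝ)/2) * ‖x‖ := by positivity
    have hc : 0 ≤ c := by
      have h0 : (0:ℝ) ≤ c * ‖j x‖ ^ ((1:ℝ)/2) * ‖x‖ ^ ((1:ℝ)/2) * ‖j x‖ ^ ((1:ℝ)/2) *
          ‖x‖ ^ ((1:ℝ)/2) * ‖x‖ := (abs_nonneg _).trans (hb x x x)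
      have h1 : (0:ℝ) ≤ c * (‖j x‖ ^ ((1:ℝ)/2) * ‖x‖ ^ ((1:ℝ)/2) * ‖j x‖ ^ ((1:ℝ)/2) *
          ‖x‖ ^ ((1:ℝ)/2) * ‖x‖) := by linarith [h0, (by ring :
            c * ‖j x‖ ^ ((1:ℝ)/2) * ‖x‖ ^ ((1:ℝ)/2) * ‖j x‖ ^ ((1:ℝ)/2) * ‖x‖ ^ ((1:ℝ)/2) * ‖x‖
            = c * (‖j x‖ ^ ((1:ℝ)/2) * ‖x‖ ^ ((1:ℝ)/2) * ‖j x‖ ^ ((1:ℝ)/2) * ‖x‖ ^ ((1:ℝ)/2) * ‖x‖))]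
      have h2 := mul_nonneg h1 (le_of_lt (inv_pos.mpr hP))
      rwa [mul_inv_cancel_right₀ hP.ne'] at h2
    -- half-power identity
    have hsq : ∀ a : ℝ, 0 ≤ a → a ^ ((1:ℝ)/2) * a ^ ((1:ℝ)/2) = a := by
      intro a ha
      rw [← Real.rpow_add' ha (by norm_num), show (1:ℝ)/2 + 1/2 = 1 by norm_num, Real.rpow_one]
    -- pointwise operator norm bound
    have hpt : ∀ x : S, ‖b x x‖ ≤ c * (‖j x‖ * ‖x‖) := by
      intro x
      refine ContinuousLinearMap.opNorm_le_bound _ (by positivity) fun w => ?_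
      have h1 := hb x x w
      rw [Real.norm_eq_abs]
      refine h1.trans (le_of_eq ?_)
      have : c * ‖j x‖ ^ ((1:ℝ)/2) * ‖x‖ ^ ((1:ℝ)/2) * ‖j x‖ ^ ((1:ℝ)/2) * ‖x‖ ^ ((1:ℝ)/2) * ‖w‖
          = c * ((‖j x‖ ^ ((1:ℝ)/2) * ‖j x‖ ^ ((1:ℝ)/2)) * (‖x‖ ^ ((1:ℝ)/2) * ‖x‖ ^ ((1:ℝ)/2))) * ‖w‖ := by
        ring
      rw [this, hsq _ (norm_nonneg _), hsq _ (norm_nonneg _)]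
    -- essential sup bound
    set M : ℝ≥0∞ := eLpNorm (fun t => j (u t)) ⊤ μ with hM
    have hMlt : M < ⊤ := huInf.2
    set C : ℝ := M.toReal with hC
    have hC0 : 0 ≤ C := ENNReal.toReal_nonneg
    have haeC : ∀ᵐ t ∂μ, ‖j (u t)‖ ≤ C := by
      have := ae_le_eLpNormEssSup (f := fun t => j (u t)) (μ := μ)
      filter_upwards [this] with t ht
      have : (‖j (u t)‖₊ : ℝ≥0∞) ≤ M := by rwa [hM, eLpNorm_exponent_top]
      have h2 := ENNReal.toReal_mono hMlt.ne this
      simpa [hC] using h2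
    -- a.e. norm bound against (c*C) • u
    have hbound : ∀ᵐ t ∂μ, ‖b (u t) (u t)‖ ≤ ‖(c * C) • u t‖ := by
      filter_upwards [haeC] with t ht
      rw [norm_smul, Real.norm_eq_abs, abs_of_nonneg (mul_nonneg hc hC0)]
      calc ‖b (u t) (u t)‖ ≤ c * (‖j (u t)‖ * ‖u t‖) := hpt (u t)
        _ ≤ c * (C * ‖u t‖) := by
            exact mul_le_mul_of_nonneg_left
              (mul_le_mul_of_nonneg_right ht (norm_nonneg _)) hc
        _ = c * C * ‖u t‖ := by ring
    have hmeas : AEStronglyMeasurable (fun t => b (u t) (u t)) μ :=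
      b.aestronglyMeasurable_comp₂ hu.aestronglyMeasurable hu.aestronglyMeasurable
    have hgmem : MemLp (fun t => (c * C) • u t) 2 μ := hu.const_smul _
    refine ⟨MemLp.of_le hgmem hmeas hbound, ?_⟩
    calc eLpNorm (fun t => b (u t) (u t)) 2 μ
        ≤ eLpNorm (fun t => (c * C) • u t) 2 μ := eLpNorm_mono_ae hbound
      _ = (‖c * C‖₊ : ℝ≥0∞) * eLpNorm u 2 μ := eLpNorm_const_smul _ _ _ _
      _ = ENNReal.ofReal (c * C) * eLpNorm u 2 μ := by
          exact congrArg (· * eLpNorm u 2 μ) (Real.enorm_eq_ofReal (mul_nonneg hc hC0))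
      _ = ENNReal.ofReal c * M * eLpNorm u 2 μ := by
          rw [ENNReal.ofReal_mul hc, hC, ENNReal.ofReal_toReal hMlt.ne]
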